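/- Let p be a prime and let a, b ∈ F_p with Teichmüller lifts [a], [b] ∈ Z_p (the unique lifts satisfying [x]^p = [x]). Then [a] + [b] − [a+b] ≡ −p · Σ_{s=1}^{p−1} (C(p,s)/p) [a]^s [b]^{p−s} (mod p^2). -/

import Mathlib

theorem stmt11 (p : ℕ) [hp : Fact p.Prime] (a b : ZMod p)
    (ta tb tab : ℤ_[p])
    (hta : ta ^ p = ta) (htb : tb ^ p = tb) (htab : tab ^ p = tab)
    (ha : PadicInt.toZMod ta = a) (hb : PadicInt.toZMod tb = b)
    (hab : PadicInt.toZMod tab = a + b) :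
    (p : ℤ_[p]) ^ 2 ∣
      (ta + tb - tab +
        p * ∑ s ∈ Finset.Icc 1 (p - 1),
          ((p.choose s / p : ℕ) : ℤ_[p]) * ta ^ s * tb ^ (p - s)) := by
  have hp2 := hp.out.two_le
  set S' : ℤ_[p] := ∑ s ∈ Finset.Icc 1 (p - 1),
      ((p.choose s : ℕ) : ℤ_[p]) * ta ^ s * tb ^ (p - s) with hS'
  -- p * S = S'
  have hpS : (p : ℤ_[p]) * ∑ s ∈ Finset.Icc 1 (p - 1),
      ((p.choose s / p : ℕ) : ℤ_[p]) * ta ^ s * tb ^ (p - s) = S' := by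
    rw [hS', Finset.mul_sum]
    refine Finset.sum_congr rfl fun s hs => ?_
    simp only [Finset.mem_Icc] at hs
    have hdvd : p ∣ p.choose s := hp.out.dvd_choose_self (by omega) (by omega)
    rw [← mul_assoc, ← mul_assoc, ← Nat.cast_mul, Nat.mul_div_cancel' hdvd]
  -- binomial expansion
  have hbin : (ta + tb) ^ p = ta + tb + S' := by
    rw [add_pow]
    have h1 : p = (p - 1) + 1 := by omega
    have h3 : ∀ f : ℕ → ℤ_[p], ∑ x ∈ Finset.range p, f x
        = ∑ i ∈ Finset.range (p - 1), f (i + 1) + f 0 := by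
      intro f
      have h4 := Finset.sum_range_succ' f (p - 1)
      rwa [Nat.sub_add_cancel (by omega : 1 ≤ p)] at h4
    rw [Finset.sum_range_succ, h3]
    rw [Nat.sub_self, pow_zero, Nat.choose_self, Nat.choose_zero_right, Nat.sub_zero,
      pow_zero, Nat.cast_one, mul_one, one_mul, mul_one, hta, htb]
    have h2 : ∑ i ∈ Finset.range (p - 1),
        ta ^ (i + 1) * tb ^ (p - (i + 1)) * ((p.choose (i + 1) : ℕ) : ℤ_[p]) = S' := by
      rw [hS', ← Finset.Ico_add_one_right_eq_Icc, Finset.sum_Ico_eq_sum_range]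
      refine Finset.sum_congr (by simp) fun i _ => ?_
      rw [add_comm 1 i]; ring
    rw [h2]; ring
  -- p ∣ (ta + tb) - tab
  have hdvd1 : (p : ℤ_[p]) ∣ (ta + tb) - tab := by
    rw [← Ideal.mem_span_singleton, ← PadicInt.maximalIdeal_eq_span_p,
      ← PadicInt.ker_toZMod, RingHom.mem_ker, map_sub, map_add, ha, hb, hab, sub_self]
  have key := dvd_sub_pow_of_dvd_sub hdvd1 1
  rw [pow_one] at key
  have hfinal : ta + tb - tab + (p : ℤ_[p]) * ∑ s ∈ Finset.Icc 1 (p - 1),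
      ((p.choose s / p : ℕ) : ℤ_[p]) * ta ^ s * tb ^ (p - s)
      = (ta + tb) ^ p - tab ^ p := by
    rw [hpS, htab]
    linear_combination -hbin
  rw [hfinal]
  exact key
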